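/- Let X = ∏_{i=1}^n [x̲_i, x̄_i] and T = ∏_{i=1}^n [t̲_i, t̄_i] with x̲_i < x̄_i and t̲_i < t̄_i for each i, let u_1, u_2 be convex real-valued functions on X, and for j = 1, 2 let x_j : T → X be a Lebesgue-measurable selection with x_j(t) ∈ argmax_{x ∈ X} (⟨x, t⟩ − u_j(x)) for every t ∈ T. If sup_{x ∈ X} |u_1(x) − u_2(x)| ≤ δ for some δ > 0, then ∫_T ‖x_1(t) − x_2(t)‖₁ dt ≤ √(2δ) · ( Σ_{i=1}^n (x̄_i − x̲_i)/(t̄_i − t̲_i) + n ) · ∏_{i=1}^n (t̄_i − t̲_i) / 2. -/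

import Mathlib

open MeasureTheory Finset

lemma ftc_squeeze {a b : ℝ} {g φ : ℝ → ℝ} (hab : a ≤ b)
    (hmono : MonotoneOn g (Set.Icc a b))
    (hsq : ∀ s t, a ≤ s → s ≤ t → t ≤ b →
      g s * (t - s) ≤ φ t - φ s ∧ φ t - φ s ≤ g t * (t - s)) :
    φ b - φ a = ∫ s in a..b, g s := by
  have hint : ∀ α β, a ≤ α → α ≤ β → β ≤ b → IntervalIntegrable g volume α β := by
    intro α β h1 h2 h3
    apply MonotoneOn.intervalIntegrable
    apply hmono.mono
    rw [Set.uIcc_of_le h2]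
    exact Set.Icc_subset_Icc h1 h3
  -- partition bound
  have key : ∀ n : ℕ, 0 < n →
      |φ b - φ a - ∫ s in a..b, g s| ≤ (g b - g a) * (b - a) / n := by
    intro n hn
    set Δ : ℝ := (b - a) / n with hΔdef
    have hΔ : 0 ≤ Δ := div_nonneg (by linarith) (by positivity)
    set τ : ℕ → ℝ := fun k => a + k * Δ with hτ
    have hτ0 : τ 0 = a := by simp [hτ]
    have hτn : τ n = b := by
      have hn' : (n:ℝ) ≠ 0 := Nat.cast_ne_zero.2 (by omega)
      have h' : (n:ℝ) * ((b - a) / n) = b - a := by field_simp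
      simp only [hτ, hΔdef]
      linarith
    have hτm : ∀ k l : ℕ, k ≤ l → τ k ≤ τ l := by
      intro k l hkl
      simp only [hτ]
      have : (k : ℝ) ≤ l := Nat.cast_le.2 hkl
      nlinarith
    have hτmem : ∀ k ≤ n, τ k ∈ Set.Icc a b := by
      intro k hk
      constructor
      · rw [← hτ0]; exact hτm 0 k (Nat.zero_le _)
      · rw [← hτn]; exact hτm k n hk
    have hτstep : ∀ k, τ (k+1) - τ k = Δ := by
      intro k; simp only [hτ]; push_cast; ring
    have hint' : ∀ k < n, IntervalIntegrable g volume (τ k) (τ (k+1)) := by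
      intro k hk
      exact hint _ _ (hτmem k (le_of_lt hk)).1 (hτm k (k+1) (Nat.le_succ _))
        (hτmem (k+1) hk).2
    have hsum : ∑ k ∈ range n, ∫ s in τ k..τ (k+1), g s = ∫ s in a..b, g s := by
      rw [intervalIntegral.sum_integral_adjacent_intervals hint']
      rw [hτ0, hτn]
    have hphisum : ∑ k ∈ range n, (φ (τ (k+1)) - φ (τ k)) = φ b - φ a := by
      rw [Finset.sum_range_sub (fun k => φ (τ k)), hτ0, hτn]
    have hgsum : ∑ k ∈ range n, (g (τ (k+1)) - g (τ k)) * Δ = (g b - g a) * Δ := by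
      rw [← Finset.sum_mul, Finset.sum_range_sub (fun k => g (τ k)), hτ0, hτn]
    -- per-piece bounds
    have piece : ∀ k < n,
        |(φ (τ (k+1)) - φ (τ k)) - ∫ s in τ k..τ (k+1), g s|
          ≤ (g (τ (k+1)) - g (τ k)) * Δ := by
      intro k hk
      have h1 := (hτmem k (le_of_lt hk)).1
      have h2 := hτm k (k+1) (Nat.le_succ _)
      have h3 := (hτmem (k+1) hk).2
      obtain ⟨hlo, hhi⟩ := hsq (τ k) (τ (k+1)) h1 h2 h3
      have hilo : g (τ k) * Δ ≤ ∫ s in τ k..τ (k+1), g s := by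
        have := intervalIntegral.integral_mono_on h2
          (intervalIntegrable_const (c := g (τ k))) (hint' k hk)
          (fun s hs => hmono ⟨h1, le_trans h2 h3⟩ ⟨le_trans h1 hs.1, le_trans hs.2 h3⟩ hs.1)
        rw [intervalIntegral.integral_const, smul_eq_mul] at this
        calc g (τ k) * Δ = (τ (k+1) - τ k) * g (τ k) := by rw [hτstep]; ring
        _ ≤ _ := this
      have hihi : ∫ s in τ k..τ (k+1), g s ≤ g (τ (k+1)) * Δ := by
        have := intervalIntegral.integral_mono_on h2
          (hint' k hk) (intervalIntegrable_const (c := g (τ (k+1))))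
          (fun s hs => hmono ⟨le_trans h1 hs.1, le_trans hs.2 h3⟩ ⟨le_trans h1 h2, h3⟩ hs.2)
        rw [intervalIntegral.integral_const, smul_eq_mul] at this
        calc ∫ s in τ k..τ (k+1), g s ≤ (τ (k+1) - τ k) * g (τ (k+1)) := this
        _ = g (τ (k+1)) * Δ := by rw [hτstep]; ring
      rw [abs_le]
      constructor
      · rw [hτstep] at *; nlinarith
      · rw [hτstep] at *; nlinarith
    calc |φ b - φ a - ∫ s in a..b, g s|
        = |∑ k ∈ range n, ((φ (τ (k+1)) - φ (τ k)) - ∫ s in τ k..τ (k+1), g s)| := by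
          rw [Finset.sum_sub_distrib, hphisum, hsum]
      _ ≤ ∑ k ∈ range n, |(φ (τ (k+1)) - φ (τ k)) - ∫ s in τ k..τ (k+1), g s| :=
          Finset.abs_sum_le_sum_abs _ _
      _ ≤ ∑ k ∈ range n, (g (τ (k+1)) - g (τ k)) * Δ :=
          Finset.sum_le_sum (fun k hk => piece k (Finset.mem_range.1 hk))
      _ = (g b - g a) * Δ := hgsum
      _ = (g b - g a) * (b - a) / n := by rw [hΔdef]; ring
  -- conclude
  have habs : |φ b - φ a - ∫ s in a..b, g s| = 0 := by
    by_contra h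
    have hpos : 0 < |φ b - φ a - ∫ s in a..b, g s| :=
      lt_of_le_of_ne (abs_nonneg _) (Ne.symm h)
    obtain ⟨n, hn⟩ := exists_nat_gt (((g b - g a) * (b - a)) / |φ b - φ a - ∫ s in a..b, g s|)
    have hn0 : 0 < n := by
      by_contra hn0
      push_neg at hn0
      interval_cases n
      have hnum : 0 ≤ (g b - g a) * (b - a) :=
        mul_nonneg (sub_nonneg.2 (hmono ⟨le_refl a, hab⟩ ⟨hab, le_refl b⟩ hab)) (by linarith)
      simp at hn
      nlinarith [div_nonneg hnum (le_of_lt hpos)]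
    have := key n hn0
    rw [div_lt_iff₀ hpos] at hn
    rw [le_div_iff₀ (by positivity : (0:ℝ) < (n:ℝ))] at this
    nlinarith
  have := abs_eq_zero.1 habs
  linarith

lemma bdd_integrableOn {α : Type*} [MeasurableSpace α] {μ : Measure α} {s : Set α}
    {f : α → ℝ} {M : ℝ} (hs : MeasurableSet s)
    (hsf : μ s ≠ ⊤) (hf : Measurable f) (hM : ∀ x ∈ s, |f x| ≤ M) :
    IntegrableOn f s μ := by
  apply Measure.integrableOn_of_bounded hsf hf.aestronglyMeasurable
  filter_upwards [ae_restrict_mem hs] with x hx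
  simpa using hM x hx

lemma oneDim {a b xl xu δ : ℝ} {g1 g2 w : ℝ → ℝ}
    (hab : a ≤ b) (hxlu : xl ≤ xu) (hδ : 0 < δ)
    (hg1m : Measurable g1) (hg2m : Measurable g2)
    (h1mono : MonotoneOn g1 (Set.Icc a b)) (h2mono : MonotoneOn g2 (Set.Icc a b))
    (h1r : ∀ t ∈ Set.Icc a b, g1 t ∈ Set.Icc xl xu)
    (h2r : ∀ t ∈ Set.Icc a b, g2 t ∈ Set.Icc xl xu)
    (hw : ∀ t ∈ Set.Icc a b, |w t| ≤ δ)
    (hinc : ∀ α β, a ≤ α → α ≤ β → β ≤ b → w β - w α = ∫ s in α..β, (g1 s - g2 s)) :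
    ∫ t in Set.Ioc a b, |g1 t - g2 t| ≤ Real.sqrt (2*δ) * ((xu - xl) + (b - a)) / 2 := by
  set d : ℝ → ℝ := fun t => g1 t - g2 t with hd
  have hdm : Measurable d := hg1m.sub hg2m
  have hIocfin : volume (Set.Ioc a b) ≠ ⊤ := by simp [Real.volume_Ioc]
  have hIocfin' : volume (Set.Ioc xl xu) ≠ ⊤ := by simp [Real.volume_Ioc]
  haveI : IsFiniteMeasure (volume.restrict (Set.Ioc a b)) := by
    constructor
    rw [Measure.restrict_apply_univ]
    exact lt_top_iff_ne_top.2 hIocfin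
  haveI : IsFiniteMeasure (volume.restrict (Set.Ioc xl xu)) := by
    constructor
    rw [Measure.restrict_apply_univ]
    exact lt_top_iff_ne_top.2 hIocfin'
  have hdbd : ∀ t ∈ Set.Icc a b, |d t| ≤ xu - xl := by
    intro t ht
    obtain ⟨h1, h2⟩ := h1r t ht
    obtain ⟨h3, h4⟩ := h2r t ht
    simp only [hd]
    rw [abs_le]; constructor <;> nlinarith
  -- the inner integral computation
  have inner : ∀ (g : ℝ → ℝ), Measurable g → MonotoneOn g (Set.Icc a b) → ∀ y : ℝ,
      ∃ s, s ∈ Set.Icc a b ∧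
        (∫ t in Set.Ioc a b, d t * (if y < g t then (1:ℝ) else 0)) = w b - w s := by
    intro g hgm hgmono y
    have hmeas : MeasurableSet {t : ℝ | y < g t} := measurableSet_lt measurable_const hgm
    set S : Set ℝ := Set.Ioc a b ∩ {t : ℝ | y < g t} with hS
    have hSsub : S ⊆ Set.Ioc a b := Set.inter_subset_left
    have hrw : (∫ t in Set.Ioc a b, d t * (if y < g t then (1:ℝ) else 0)) = ∫ t in S, d t := by
      have h1 : ∀ t, d t * (if y < g t then (1:ℝ) else 0)
          = ({t : ℝ | y < g t}).indicator d t := by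
        intro t
        simp only [Set.indicator_apply, Set.mem_setOf_eq]
        split <;> simp
      simp_rw [h1]
      rw [setIntegral_indicator hmeas]
    rcases Set.eq_empty_or_nonempty S with hemp | hne
    · refine ⟨b, ⟨hab, le_refl b⟩, ?_⟩
      rw [hrw, hemp]
      simp
    · set s : ℝ := sInf S with hsdef
      have hbdd : BddBelow S := ⟨a, fun t htS => le_of_lt (hSsub htS).1⟩
      have hsa : a ≤ s := le_csInf hne (fun t htS => le_of_lt (hSsub htS).1)
      obtain ⟨t0, ht0⟩ := hne
      have hsb : s ≤ b := le_trans (csInf_le hbdd ht0) (hSsub ht0).2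
      refine ⟨s, ⟨hsa, hsb⟩, ?_⟩
      have hae : S =ᵐ[volume] Set.Ioc s b := by
        rw [MeasureTheory.ae_eq_set]
        constructor
        · refine measure_mono_null ?_ (measure_singleton s)
          rintro t ⟨htS, htn⟩
          have h1 : s ≤ t := csInf_le hbdd htS
          have h2 : t ≤ b := (hSsub htS).2
          simp only [Set.mem_Ioc, not_and_or, not_lt, not_le] at htn
          rcases htn with h | h
          · simp [le_antisymm h h1]
          · exact absurd h2 (by linarith)
        · refine measure_mono_null ?_ (measure_singleton b)
          rintro t ⟨htI, htn⟩
          rcases eq_or_lt_of_le htI.2 with h | h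
          · simp [h]
          · exfalso
            apply htn
            obtain ⟨r, hrS, hrt⟩ := (csInf_lt_iff hbdd ⟨t0, ht0⟩).1 htI.1
            refine ⟨⟨lt_trans (hSsub hrS).1 hrt, htI.2⟩, ?_⟩
            have : g r ≤ g t := hgmono ⟨le_of_lt (hSsub hrS).1, le_trans (le_of_lt hrt) (le_of_lt h)⟩
              ⟨le_trans hsa (le_of_lt htI.1), htI.2⟩ (le_of_lt hrt)
            exact lt_of_lt_of_le hrS.2 this
      rw [hrw, setIntegral_congr_set hae, ← intervalIntegral.integral_of_le hsb,
        ← hinc s b hsa hsb (le_refl b)]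
  -- representation of g t - xl as an integral in y
  have hrep : ∀ c : ℝ, c ∈ Set.Icc xl xu →
      (∫ y in Set.Ioc xl xu, (if y < c then (1:ℝ) else 0)) = c - xl := by
    intro c hc
    have h1 : ∀ y : ℝ, (if y < c then (1:ℝ) else 0) = (Set.Iio c).indicator (fun _ => (1:ℝ)) y := by
      intro y
      simp only [Set.indicator_apply, Set.mem_Iio]
    simp_rw [h1]
    rw [setIntegral_indicator measurableSet_Iio]
    have h2 : Set.Ioc xl xu ∩ Set.Iio c = Set.Ioo xl c := by
      ext y
      simp only [Set.mem_inter_iff, Set.mem_Ioc, Set.mem_Iio, Set.mem_Ioo]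
      constructor
      · rintro ⟨⟨hy1, hy2⟩, hy3⟩; exact ⟨hy1, hy3⟩
      · rintro ⟨hy1, hy3⟩; exact ⟨⟨hy1, le_trans (le_of_lt hy3) hc.2⟩, hy3⟩
    rw [h2]
    simp [Real.volume_Ioo, ENNReal.toReal_ofReal (by linarith [hc.1] : (0:ℝ) ≤ c - xl), hc.1]
  -- product integrability
  have hprodInt : ∀ (g : ℝ → ℝ), Measurable g →
      Integrable (Function.uncurry fun t y => d t * (if y < g t then (1:ℝ) else 0))
        ((volume.restrict (Set.Ioc a b)).prod (volume.restrict (Set.Ioc xl xu))) := by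
    intro g hgm
    have hfeq : (Function.uncurry fun t y => d t * (if y < g t then (1:ℝ) else 0))
        = fun p : ℝ × ℝ => d p.1 * (if p.2 < g p.1 then (1:ℝ) else 0) := rfl
    rw [hfeq]
    have hmeas : Measurable (fun p : ℝ × ℝ => d p.1 * (if p.2 < g p.1 then (1:ℝ) else 0)) := by
      apply (hdm.comp measurable_fst).mul
      exact Measurable.ite (measurableSet_lt measurable_snd (hgm.comp measurable_fst))
        measurable_const measurable_const
    apply Integrable.mono' (integrable_const (xu - xl)) hmeas.aestronglyMeasurable
    rw [Measure.prod_restrict]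
    filter_upwards [ae_restrict_mem (measurableSet_Ioc.prod measurableSet_Ioc)] with p hp
    have hp1 : p.1 ∈ Set.Icc a b := Set.Ioc_subset_Icc_self hp.1
    have hb1 : |d p.1| ≤ xu - xl := hdbd p.1 hp1
    have : |d p.1 * (if p.2 < g p.1 then (1:ℝ) else 0)| ≤ |d p.1| := by
      rw [abs_mul]
      split <;> simp [abs_nonneg]
    simpa using le_trans this hb1
  -- the squared integral bound
  have key : (∫ t in Set.Ioc a b, d t ^ 2) ≤ 2 * δ * (xu - xl) := by
    have hintj : ∀ (g : ℝ → ℝ), Measurable g → (∀ t ∈ Set.Icc a b, g t ∈ Set.Icc xl xu) →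
        IntegrableOn (fun t => d t * (g t - xl)) (Set.Ioc a b) volume := by
      intro g hgm hgr
      apply bdd_integrableOn measurableSet_Ioc hIocfin (hdm.mul (hgm.sub measurable_const))
        (M := (xu - xl) * (xu - xl))
      intro t ht
      have ht' : t ∈ Set.Icc a b := Set.Ioc_subset_Icc_self ht
      have h1 := hdbd t ht'
      have h2 := (hgr t ht').1
      have h3 := (hgr t ht').2
      show |d t * (g t - xl)| ≤ _
      rw [abs_mul]
      apply mul_le_mul h1 _ (abs_nonneg _) (by linarith)
      rw [abs_le]; constructor <;> linarith
    have step1 : (∫ t in Set.Ioc a b, d t ^ 2)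
        = (∫ t in Set.Ioc a b, d t * (g1 t - xl)) - ∫ t in Set.Ioc a b, d t * (g2 t - xl) := by
      rw [← integral_sub (hintj g1 hg1m h1r) (hintj g2 hg2m h2r)]
      apply setIntegral_congr_fun measurableSet_Ioc
      intro t _
      simp only [hd]; ring
    have step2 : ∀ (g : ℝ → ℝ), Measurable g → (∀ t ∈ Set.Icc a b, g t ∈ Set.Icc xl xu) →
        (∫ t in Set.Ioc a b, d t * (g t - xl))
          = ∫ y in Set.Ioc xl xu, ∫ t in Set.Ioc a b, d t * (if y < g t then (1:ℝ) else 0) := by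
      intro g hgm hgr
      rw [← integral_integral_swap (hprodInt g hgm)]
      apply setIntegral_congr_fun measurableSet_Ioc
      intro t ht
      simp only []
      rw [MeasureTheory.integral_const_mul, hrep (g t) (hgr t (Set.Ioc_subset_Icc_self ht))]
    have innerInt : ∀ (g : ℝ → ℝ), Measurable g →
        Integrable (fun y => ∫ t in Set.Ioc a b, d t * (if y < g t then (1:ℝ) else 0))
          (volume.restrict (Set.Ioc xl xu)) := (fun g hgm => (hprodInt g hgm).integral_prod_right)
    rw [step1, step2 g1 hg1m h1r, step2 g2 hg2m h2r,
      ← integral_sub (innerInt g1 hg1m) (innerInt g2 hg2m)]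
    have bound : ∀ y : ℝ,
        ((∫ t in Set.Ioc a b, d t * (if y < g1 t then (1:ℝ) else 0))
          - ∫ t in Set.Ioc a b, d t * (if y < g2 t then (1:ℝ) else 0)) ≤ 2 * δ := by
      intro y
      obtain ⟨s1, hs1, e1⟩ := inner g1 hg1m h1mono y
      obtain ⟨s2, hs2, e2⟩ := inner g2 hg2m h2mono y
      rw [e1, e2]
      have h1 := abs_le.1 (hw s1 hs1)
      have h2 := abs_le.1 (hw s2 hs2)
      linarith
    calc (∫ y in Set.Ioc xl xu,
          ((∫ t in Set.Ioc a b, d t * (if y < g1 t then (1:ℝ) else 0))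
            - ∫ t in Set.Ioc a b, d t * (if y < g2 t then (1:ℝ) else 0)))
        ≤ ∫ _y in Set.Ioc xl xu, 2 * δ := by
          apply integral_mono ((innerInt g1 hg1m).sub (innerInt g2 hg2m)) (integrable_const _)
          intro y
          exact bound y
      _ = 2 * δ * (xu - xl) := by
          rw [setIntegral_const, measureReal_def, Real.volume_Ioc, smul_eq_mul,
            ENNReal.toReal_ofReal (by linarith : (0:ℝ) ≤ xu - xl)]
          ring
  -- final step
  set c : ℝ := Real.sqrt (2 * δ) with hc
  have hcpos : 0 < c := Real.sqrt_pos.2 (by linarith)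
  have hcsq : c ^ 2 = 2 * δ := Real.sq_sqrt (by linarith)
  have hptw : ∀ t, |d t| ≤ (d t ^ 2 + c ^ 2) / (2 * c) := by
    intro t
    rw [le_div_iff₀ (by linarith)]
    nlinarith [sq_nonneg (|d t| - c), sq_abs (d t)]
  have hdint : IntegrableOn (fun t => |d t|) (Set.Ioc a b) volume := by
    apply bdd_integrableOn measurableSet_Ioc hIocfin hdm.abs (M := xu - xl)
    intro t ht
    simpa using hdbd t (Set.Ioc_subset_Icc_self ht)
  have hd2int : IntegrableOn (fun t => d t ^ 2) (Set.Ioc a b) volume := by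
    apply bdd_integrableOn measurableSet_Ioc hIocfin (hdm.pow_const 2)
      (M := (xu - xl) ^ 2)
    intro t ht
    have h1 := hdbd t (Set.Ioc_subset_Icc_self ht)
    rw [abs_pow]
    apply pow_le_pow_left₀ (abs_nonneg _) h1
  calc (∫ t in Set.Ioc a b, |g1 t - g2 t|)
      ≤ ∫ t in Set.Ioc a b, (d t ^ 2 + c ^ 2) / (2 * c) := by
        apply integral_mono hdint _ (fun t => hptw t)
        apply Integrable.div_const
        exact hd2int.add (integrable_const _)
    _ = ((∫ t in Set.Ioc a b, d t ^ 2) + c ^ 2 * (b - a)) / (2 * c) := by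
        rw [integral_div, integral_add hd2int (integrable_const _), setIntegral_const,
          measureReal_def, Real.volume_Ioc, smul_eq_mul, ENNReal.toReal_ofReal (by linarith : (0:ℝ) ≤ b - a)]
        ring
    _ ≤ (2 * δ * (xu - xl) + c ^ 2 * (b - a)) / (2 * c) := by
        gcongr
    _ = c * ((xu - xl) + (b - a)) / 2 := by
        rw [← hcsq]
        field_simp


/-- Multi-dimensional conjugate stability.
If `u₁, u₂` are convex on the box `X = ∏ᵢ [xl i, xu i]`, `x₁, x₂` are measurable argmax
selections of `x ↦ ⟨x, t⟩ − uⱼ(x)` over `X` for `t` in the box `T = ∏ᵢ [tl i, tu i]`, and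
`sup_{x ∈ X} |u₁ x − u₂ x| ≤ δ`, then
`∫_T ‖x₁(t) − x₂(t)‖₁ dt ≤ √(2δ)·(Σᵢ (xu i − xl i)/(tu i − tl i) + n)·∏ᵢ (tu i − tl i)/2`. -/
theorem conjugate_selection_l1_bound_multi_dim
    (n : ℕ) (xl xu tl tu : Fin n → ℝ) (δ : ℝ)
    (hx : ∀ i, xl i < xu i) (ht : ∀ i, tl i < tu i) (hδ : 0 < δ)
    (u1 u2 : (Fin n → ℝ) → ℝ)
    (hu1 : ConvexOn ℝ (Set.pi Set.univ fun i => Set.Icc (xl i) (xu i)) u1)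
    (hu2 : ConvexOn ℝ (Set.pi Set.univ fun i => Set.Icc (xl i) (xu i)) u2)
    (x1 x2 : (Fin n → ℝ) → Fin n → ℝ)
    (hm1 : Measurable x1) (hm2 : Measurable x2)
    (hsel1 : ∀ t ∈ Set.pi Set.univ fun i => Set.Icc (tl i) (tu i),
      (x1 t ∈ Set.pi Set.univ fun i => Set.Icc (xl i) (xu i)) ∧
      ∀ x ∈ Set.pi Set.univ fun i => Set.Icc (xl i) (xu i),
        (∑ i, x i * t i) - u1 x ≤ (∑ i, x1 t i * t i) - u1 (x1 t))
    (hsel2 : ∀ t ∈ Set.pi Set.univ fun i => Set.Icc (tl i) (tu i),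
      (x2 t ∈ Set.pi Set.univ fun i => Set.Icc (xl i) (xu i)) ∧
      ∀ x ∈ Set.pi Set.univ fun i => Set.Icc (xl i) (xu i),
        (∑ i, x i * t i) - u2 x ≤ (∑ i, x2 t i * t i) - u2 (x2 t))
    (hclose : ∀ x ∈ Set.pi Set.univ fun i => Set.Icc (xl i) (xu i), |u1 x - u2 x| ≤ δ) :
    (∫ t in Set.pi Set.univ fun i => Set.Icc (tl i) (tu i), ∑ i, |x1 t i - x2 t i|) ≤
      Real.sqrt (2 * δ) * ((∑ i, (xu i - xl i) / (tu i - tl i)) + n) *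
        (∏ i, (tu i - tl i)) / 2 := by
  classical
  rcases n with _ | m
  · simp
  set BT : Set (Fin (m + 1) → ℝ) := Set.pi Set.univ fun i => Set.Icc (tl i) (tu i) with hBTdef
  set BT' : Set (Fin (m + 1) → ℝ) := Set.pi Set.univ fun i => Set.Ioc (tl i) (tu i) with hBT'def
  set φ1 : (Fin (m + 1) → ℝ) → ℝ := fun t => (∑ k, x1 t k * t k) - u1 (x1 t) with hφ1
  set φ2 : (Fin (m + 1) → ℝ) → ℝ := fun t => (∑ k, x2 t k * t k) - u2 (x2 t) with hφ2
  have hBT'sub : BT' ⊆ BT := by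
    apply Set.pi_mono
    intro j _
    exact Set.Ioc_subset_Icc_self
  have fact1 : ∀ t ∈ BT, ∀ t' ∈ BT, ∀ i : Fin (m + 1), (∀ k, k ≠ i → t k = t' k) →
      x1 t i * (t' i - t i) ≤ φ1 t' - φ1 t := by
    intro t htm t' htm' i heq
    have h := (hsel1 t' htm').2 (x1 t) (hsel1 t htm).1
    have hsum : (∑ k, x1 t k * t' k) - (∑ k, x1 t k * t k) = x1 t i * (t' i - t i) := by
      rw [← Finset.sum_sub_distrib, Finset.sum_eq_single i]
      · ring
      · intro k _ hk; rw [heq k hk]; ring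
      · intro hi; exact absurd (Finset.mem_univ i) hi
    simp only [hφ1]
    linarith
  have fact2 : ∀ t ∈ BT, ∀ t' ∈ BT, ∀ i : Fin (m + 1), (∀ k, k ≠ i → t k = t' k) →
      x2 t i * (t' i - t i) ≤ φ2 t' - φ2 t := by
    intro t htm t' htm' i heq
    have h := (hsel2 t' htm').2 (x2 t) (hsel2 t htm).1
    have hsum : (∑ k, x2 t k * t' k) - (∑ k, x2 t k * t k) = x2 t i * (t' i - t i) := by
      rw [← Finset.sum_sub_distrib, Finset.sum_eq_single i]
      · ring
      · intro k _ hk; rw [heq k hk]; ring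
      · intro hi; exact absurd (Finset.mem_univ i) hi
    simp only [hφ2]
    linarith
  have factC : ∀ t ∈ BT, |φ1 t - φ2 t| ≤ δ := by
    intro t htm
    have h1 := (hsel2 t htm).2 (x1 t) (hsel1 t htm).1
    have h2 := (hsel1 t htm).2 (x2 t) (hsel2 t htm).1
    have h3 := abs_le.1 (hclose (x1 t) (hsel1 t htm).1)
    have h4 := abs_le.1 (hclose (x2 t) (hsel2 t htm).1)
    simp only [hφ1, hφ2]
    rw [abs_le]
    constructor <;> linarith
  have hrange1 : ∀ t ∈ BT, ∀ i : Fin (m + 1), x1 t i ∈ Set.Icc (xl i) (xu i) :=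
    fun t htm i => (hsel1 t htm).1 i (Set.mem_univ i)
  have hrange2 : ∀ t ∈ BT, ∀ i : Fin (m + 1), x2 t i ∈ Set.Icc (xl i) (xu i) :=
    fun t htm i => (hsel2 t htm).1 i (Set.mem_univ i)
  have hTpos : ∀ i, (0:ℝ) < tu i - tl i := fun i => sub_pos.2 (ht i)
  have hBT'm : MeasurableSet BT' := MeasurableSet.univ_pi fun j => measurableSet_Ioc
  have hvolBT' : volume BT' ≠ ⊤ := by
    rw [hBT'def, volume_pi, Measure.pi_pi]
    simp only [Real.volume_Ioc]
    exact (ENNReal.prod_lt_top (fun i _ => ENNReal.ofReal_lt_top)).ne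
  have hmd : ∀ i : Fin (m + 1), Measurable (fun t : Fin (m + 1) → ℝ => |x1 t i - x2 t i|) :=
    fun i => (((measurable_pi_apply i).comp hm1).sub ((measurable_pi_apply i).comp hm2)).abs
  have hbd : ∀ i : Fin (m + 1), ∀ t ∈ BT, |x1 t i - x2 t i| ≤ xu i - xl i := by
    intro i t htm
    obtain ⟨a1, a2⟩ := hrange1 t htm i
    obtain ⟨b1, b2⟩ := hrange2 t htm i
    rw [abs_le]
    constructor <;> linarith
  have hintF : ∀ i : Fin (m + 1), IntegrableOn (fun t => |x1 t i - x2 t i|) BT' volume := by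
    intro i
    exact bdd_integrableOn hBT'm hvolBT' (hmd i)
      (fun t htm => by simpa [abs_abs] using hbd i t (hBT'sub htm))
  -- the per-coordinate bound
  have key : ∀ i : Fin (m + 1),
      (∫ t in BT', |x1 t i - x2 t i|) ≤
        Real.sqrt (2*δ) * ((xu i - xl i) + (tu i - tl i)) / 2
          * ∏ j : Fin m, (tu (i.succAbove j) - tl (i.succAbove j)) := by
    intro i
    set e := MeasurableEquiv.piFinSuccAbove (fun _ : Fin (m + 1) => ℝ) i with he
    have hmp : MeasurePreserving e.symm :=
      (volume_preserving_piFinSuccAbove (fun _ : Fin (m + 1) => ℝ) i).symm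
    set S2 : Set (Fin m → ℝ) :=
      Set.pi Set.univ (fun j => Set.Ioc (tl (i.succAbove j)) (tu (i.succAbove j))) with hS2
    have hesymm : ∀ z : ℝ × (Fin m → ℝ), e.symm z = i.insertNth z.1 z.2 := by
      intro z
      rfl
    have hpre : e.symm ⁻¹' BT' = (Set.Ioc (tl i) (tu i)) ×ˢ S2 := by
      ext z
      simp only [Set.mem_preimage, hBT'def, Set.mem_pi, Set.mem_univ, forall_true_left,
        Set.mem_prod, hS2, hesymm]
      rw [Fin.forall_iff_succAbove i]
      simp [Fin.insertNth_apply_same, Fin.insertNth_apply_succAbove]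
    have h0 : (∫ t in BT', |x1 t i - x2 t i|)
        = ∫ z in (Set.Ioc (tl i) (tu i)) ×ˢ S2, |x1 (e.symm z) i - x2 (e.symm z) i| := by
      rw [← hpre]
      exact (hmp.setIntegral_preimage_emb e.symm.measurableEmbedding
        (fun t => |x1 t i - x2 t i|) BT').symm
    have hS2m : MeasurableSet S2 := MeasurableSet.univ_pi fun j => measurableSet_Ioc
    have hS2fin : volume S2 ≠ ⊤ := by
      rw [hS2, volume_pi, Measure.pi_pi]
      simp only [Real.volume_Ioc]
      exact (ENNReal.prod_lt_top (fun j _ => ENNReal.ofReal_lt_top)).ne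
    have hS1fin : volume (Set.Ioc (tl i) (tu i)) ≠ ⊤ := by simp [Real.volume_Ioc]
    haveI : IsFiniteMeasure (volume.restrict (Set.Ioc (tl i) (tu i))) := by
      constructor; rw [Measure.restrict_apply_univ]; exact lt_top_iff_ne_top.2 hS1fin
    haveI : IsFiniteMeasure (volume.restrict S2) := by
      constructor; rw [Measure.restrict_apply_univ]; exact lt_top_iff_ne_top.2 hS2fin
    have hsubBT : ∀ z : ℝ × (Fin m → ℝ), z ∈ (Set.Ioc (tl i) (tu i)) ×ˢ S2 →
        e.symm z ∈ BT := by
      intro z hz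
      rw [← hpre] at hz
      exact hBT'sub hz
    have hGm : Measurable (fun z : ℝ × (Fin m → ℝ) =>
        |x1 (e.symm z) i - x2 (e.symm z) i|) :=
      (((measurable_pi_apply i).comp (hm1.comp e.symm.measurable)).sub
        ((measurable_pi_apply i).comp (hm2.comp e.symm.measurable))).abs
    have hGint : Integrable (fun z : ℝ × (Fin m → ℝ) =>
        |x1 (e.symm z) i - x2 (e.symm z) i|)
        ((volume.restrict (Set.Ioc (tl i) (tu i))).prod (volume.restrict S2)) := by
      apply Integrable.mono' (integrable_const (xu i - xl i)) hGm.aestronglyMeasurable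
      rw [Measure.prod_restrict]
      filter_upwards [ae_restrict_mem (measurableSet_Ioc.prod hS2m)] with z hz
      simpa using hbd i (e.symm z) (hsubBT z hz)
    rw [h0, Measure.volume_eq_prod, ← Measure.prod_restrict,
      integral_prod_symm _ hGint]
    -- inner bound for every y in S2
    have inner_bd : ∀ y ∈ S2,
        (∫ r in Set.Ioc (tl i) (tu i), |x1 (e.symm (r, y)) i - x2 (e.symm (r, y)) i|)
          ≤ Real.sqrt (2*δ) * ((xu i - xl i) + (tu i - tl i)) / 2 := by
      intro y hy
      set tv : ℝ → (Fin (m + 1) → ℝ) := fun r => e.symm (r, y) with htv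
      have htvi : ∀ r : ℝ, tv r i = r := by
        intro r
        simp only [htv, hesymm]
        simp
      have htvmem : ∀ r ∈ Set.Icc (tl i) (tu i), tv r ∈ BT := by
        intro r hr
        intro k _
        rcases eq_or_ne k i with hk | hk
        · subst hk
          rw [htvi r]
          exact hr
        · obtain ⟨j, hj⟩ := Fin.exists_succAbove_eq hk
          subst hj
          have : tv r (i.succAbove j) = y j := by
            simp only [htv, hesymm]
            simp
          rw [this]
          exact Set.Ioc_subset_Icc_self (hy j (Set.mem_univ _))
      have htvoff : ∀ r r' : ℝ, ∀ k, k ≠ i → tv r k = tv r' k := by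
        intro r r' k hk
        obtain ⟨j, hj⟩ := Fin.exists_succAbove_eq hk
        subst hj
        simp only [htv, hesymm]
        simp
      set G1 : ℝ → ℝ := fun r => x1 (tv r) i with hG1
      set G2 : ℝ → ℝ := fun r => x2 (tv r) i with hG2
      set W : ℝ → ℝ := fun r => φ1 (tv r) - φ2 (tv r) with hW
      have hsq1 : ∀ s t : ℝ, tl i ≤ s → s ≤ t → t ≤ tu i →
          G1 s * (t - s) ≤ φ1 (tv t) - φ1 (tv s) ∧
            φ1 (tv t) - φ1 (tv s) ≤ G1 t * (t - s) := by
        intro s t h1 h2 h3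
        have hms := htvmem s ⟨h1, le_trans h2 h3⟩
        have hmt := htvmem t ⟨le_trans h1 h2, h3⟩
        constructor
        · have := fact1 (tv s) hms (tv t) hmt i (fun k hk => htvoff s t k hk)
          rwa [htvi, htvi] at this
        · have h4 := fact1 (tv t) hmt (tv s) hms i (fun k hk => htvoff t s k hk)
          rw [htvi, htvi] at h4
          have h5 : x1 (tv t) i * (s - t) = -(G1 t * (t - s)) := by rw [hG1]; ring
          rw [h5] at h4
          linarith
      have hsq2 : ∀ s t : ℝ, tl i ≤ s → s ≤ t → t ≤ tu i →
          G2 s * (t - s) ≤ φ2 (tv t) - φ2 (tv s) ∧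
            φ2 (tv t) - φ2 (tv s) ≤ G2 t * (t - s) := by
        intro s t h1 h2 h3
        have hms := htvmem s ⟨h1, le_trans h2 h3⟩
        have hmt := htvmem t ⟨le_trans h1 h2, h3⟩
        constructor
        · have := fact2 (tv s) hms (tv t) hmt i (fun k hk => htvoff s t k hk)
          rwa [htvi, htvi] at this
        · have h4 := fact2 (tv t) hmt (tv s) hms i (fun k hk => htvoff t s k hk)
          rw [htvi, htvi] at h4
          have h5 : x2 (tv t) i * (s - t) = -(G2 t * (t - s)) := by rw [hG2]; ring
          rw [h5] at h4
          linarith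
      have hmono1 : MonotoneOn G1 (Set.Icc (tl i) (tu i)) := by
        intro r hr r' hr' hle
        rcases eq_or_lt_of_le hle with hcase | hcase
        · rw [hcase]
        · have A := (hsq1 r r' hr.1 hle hr'.2).1
          have B := (hsq1 r r' hr.1 hle hr'.2).2
          nlinarith
      have hmono2 : MonotoneOn G2 (Set.Icc (tl i) (tu i)) := by
        intro r hr r' hr' hle
        rcases eq_or_lt_of_le hle with hcase | hcase
        · rw [hcase]
        · have A := (hsq2 r r' hr.1 hle hr'.2).1
          have B := (hsq2 r r' hr.1 hle hr'.2).2
          nlinarith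
      have hr1 : ∀ r ∈ Set.Icc (tl i) (tu i), G1 r ∈ Set.Icc (xl i) (xu i) :=
        fun r hr => hrange1 (tv r) (htvmem r hr) i
      have hr2 : ∀ r ∈ Set.Icc (tl i) (tu i), G2 r ∈ Set.Icc (xl i) (xu i) :=
        fun r hr => hrange2 (tv r) (htvmem r hr) i
      have hWbd : ∀ r ∈ Set.Icc (tl i) (tu i), |W r| ≤ δ :=
        fun r hr => factC (tv r) (htvmem r hr)
      have htvm : Measurable tv :=
        e.symm.measurable.comp (measurable_id.prodMk measurable_const)
      have hGm1 : Measurable G1 := (measurable_pi_apply i).comp (hm1.comp htvm)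
      have hGm2 : Measurable G2 := (measurable_pi_apply i).comp (hm2.comp htvm)
      have hinc : ∀ α β : ℝ, tl i ≤ α → α ≤ β → β ≤ tu i →
          W β - W α = ∫ s in α..β, (G1 s - G2 s) := by
        intro α β hα hαβ hβ
        have hmono1' : MonotoneOn G1 (Set.Icc α β) :=
          hmono1.mono (Set.Icc_subset_Icc hα hβ)
        have hmono2' : MonotoneOn G2 (Set.Icc α β) :=
          hmono2.mono (Set.Icc_subset_Icc hα hβ)
        have I1 : φ1 (tv β) - φ1 (tv α) = ∫ s in α..β, G1 s :=
          ftc_squeeze hαβ hmono1'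
            (fun s t h1 h2 h3 => hsq1 s t (le_trans hα h1) h2 (le_trans h3 hβ))
        have I2 : φ2 (tv β) - φ2 (tv α) = ∫ s in α..β, G2 s :=
          ftc_squeeze hαβ hmono2'
            (fun s t h1 h2 h3 => hsq2 s t (le_trans hα h1) h2 (le_trans h3 hβ))
        have hi1 : IntervalIntegrable G1 volume α β := by
          apply MonotoneOn.intervalIntegrable
          rwa [Set.uIcc_of_le hαβ]
        have hi2 : IntervalIntegrable G2 volume α β := by
          apply MonotoneOn.intervalIntegrable
          rwa [Set.uIcc_of_le hαβ]
        rw [intervalIntegral.integral_sub hi1 hi2, ← I1, ← I2, hW]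
        ring
      exact oneDim (le_of_lt (ht i)) (le_of_lt (hx i)) hδ hGm1 hGm2
        hmono1 hmono2 hr1 hr2 hWbd hinc
    -- integrate the inner bound over S2
    have hHint : Integrable (fun y => ∫ r in Set.Ioc (tl i) (tu i),
        |x1 (e.symm (r, y)) i - x2 (e.symm (r, y)) i|) (volume.restrict S2) :=
      hGint.integral_prod_right
    calc (∫ y in S2, ∫ r in Set.Ioc (tl i) (tu i),
            |x1 (e.symm (r, y)) i - x2 (e.symm (r, y)) i|)
        ≤ ∫ _y in S2, Real.sqrt (2*δ) * ((xu i - xl i) + (tu i - tl i)) / 2 := by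
          apply setIntegral_mono_on hHint (integrable_const _) hS2m
          exact inner_bd
      _ = Real.sqrt (2*δ) * ((xu i - xl i) + (tu i - tl i)) / 2
            * ∏ j : Fin m, (tu (i.succAbove j) - tl (i.succAbove j)) := by
          rw [setIntegral_const, smul_eq_mul, mul_comm]
          congr 1
          rw [hS2, volume_pi, measureReal_def, Measure.pi_pi, ENNReal.toReal_prod]
          apply Finset.prod_congr rfl
          intro j _
          rw [Real.volume_Ioc, ENNReal.toReal_ofReal (le_of_lt (hTpos (i.succAbove j)))]
  -- assemble
  have hIccIoc : BT =ᵐ[volume] BT' := by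
    rw [hBTdef, hBT'def, volume_pi]
    exact (Measure.pi_Ioc_ae_eq_pi_Icc (μ := fun _ : Fin (m + 1) => (volume : Measure ℝ))).symm
  calc (∫ t in BT, ∑ i, |x1 t i - x2 t i|)
      = ∫ t in BT', ∑ i, |x1 t i - x2 t i| := setIntegral_congr_set hIccIoc
    _ = ∑ i, ∫ t in BT', |x1 t i - x2 t i| := by
        rw [integral_finset_sum]
        intro i _
        exact hintF i
    _ ≤ ∑ i, Real.sqrt (2*δ) * ((xu i - xl i) + (tu i - tl i)) / 2
          * ∏ j : Fin m, (tu (i.succAbove j) - tl (i.succAbove j)) :=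
        Finset.sum_le_sum (fun i _ => key i)
    _ = Real.sqrt (2 * δ) * ((∑ i, (xu i - xl i) / (tu i - tl i)) + (m + 1 : ℕ)) *
        (∏ i, (tu i - tl i)) / 2 := by
        have hterm : ∀ i : Fin (m + 1),
            Real.sqrt (2*δ) * ((xu i - xl i) + (tu i - tl i)) / 2
              * ∏ j : Fin m, (tu (i.succAbove j) - tl (i.succAbove j))
            = Real.sqrt (2*δ) / 2 * ((xu i - xl i) / (tu i - tl i)
                * ∏ k, (tu k - tl k) + ∏ k, (tu k - tl k)) := by
          intro i
          rw [Fin.prod_univ_succAbove (fun k => tu k - tl k) i]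
          have hne : tu i - tl i ≠ 0 := ne_of_gt (hTpos i)
          field_simp
        rw [Finset.sum_congr rfl (fun i _ => hterm i), ← Finset.mul_sum,
          Finset.sum_add_distrib, ← Finset.sum_mul, Finset.sum_const,
          Finset.card_univ, Fintype.card_fin, nsmul_eq_mul]
        ring
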